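/- Let n ≥ 2, 0 < γ < n, 0 < δ < n, a, b ≥ 0 and p, q > 0. Suppose u, v : ℝⁿ → [0,∞) are continuous, solve the integral system (IE) with parameters (γ, δ, a, b, p, q), and (u, v) is not identically (0, 0). Then u(x) > 0 and v(x) > 0 for every x ∈ ℝⁿ, and there exists C > 0 such that u(x) ≥ C·|x|^{−(n−γ)} and v(x) ≥ C·|x|^{−(n−δ)} for all |x| ≥ 1. -/

import Mathlib

open MeasureTheory Metric Set

/-- Spherical average of `w` over the sphere of radius `r` centered at the origin,
with respect to the `(n-1)`-dimensional (Hausdorff) surface measure. -/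
noncomputable def sphAvg (n : ℕ) (w : EuclideanSpace ℝ (Fin n) → ℝ) (r : ℝ) : ℝ :=
  ⨍ x in sphere (0 : EuclideanSpace ℝ (Fin n)) r, w x ∂(μH[(n : ℝ) - 1])
/-- The Riesz potential constant `R_{s,n}`. -/
noncomputable def Rconst (n : ℕ) (s : ℝ) : ℝ :=
  Real.Gamma (((n : ℝ) - s) / 2) / (Real.pi ^ ((n : ℝ) / 2) * 2 ^ s * Real.Gamma (s / 2))
/-- The integral system (IE) with parameters `(γ, δ, a, b, p, q)`:
`u(x) = R_{γ,n} ∫ |y|^a v(y)^p |x-y|^{γ-n} dy`,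
`v(x) = R_{δ,n} ∫ |y|^b u(y)^q |x-y|^{δ-n} dy`, all integrals being finite. -/
def SolvesIE (n : ℕ) (γ δ a b p q : ℝ)
    (u v : EuclideanSpace ℝ (Fin n) → ℝ) : Prop :=
  (∀ x, Integrable (fun y => ‖y‖ ^ a * v y ^ p * ‖x - y‖ ^ (γ - (n : ℝ)))) ∧
  (∀ x, Integrable (fun y => ‖y‖ ^ b * u y ^ q * ‖x - y‖ ^ (δ - (n : ℝ)))) ∧
  (∀ x, u x = Rconst n γ * ∫ y, ‖y‖ ^ a * v y ^ p * ‖x - y‖ ^ (γ - (n : ℝ))) ∧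
  (∀ x, v x = Rconst n δ * ∫ y, ‖y‖ ^ b * u y ^ q * ‖x - y‖ ^ (δ - (n : ℝ)))

lemma Rconst_pos (n : ℕ) {s : ℝ} (h1 : 0 < s) (h2 : s < n) : 0 < Rconst n s := by
  unfold Rconst
  apply div_pos (Real.Gamma_pos_of_pos (by linarith))
  exact mul_pos (mul_pos (Real.rpow_pos_of_pos Real.pi_pos _)
    (Real.rpow_pos_of_pos two_pos _)) (Real.Gamma_pos_of_pos (by linarith))

lemma IE_nontrivial (n : ℕ) (hn : 2 ≤ n) : Nontrivial (EuclideanSpace ℝ (Fin n)) := by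
  haveI : Nonempty (Fin n) := ⟨⟨0, by omega⟩⟩
  refine ⟨0, EuclideanSpace.single ⟨0, by omega⟩ 1, ?_⟩
  intro h
  have := congrArg (fun f : EuclideanSpace ℝ (Fin n) => f ⟨0, by omega⟩) h.symm
  simp [EuclideanSpace.single] at this

lemma IE_pair_null (n : ℕ) (hn : 2 ≤ n) (z x : EuclideanSpace ℝ (Fin n)) :
    volume ({z, x} : Set (EuclideanSpace ℝ (Fin n))) = 0 := by
  haveI := IE_nontrivial n hn
  refine le_antisymm ?_ zero_le
  calc volume ({z, x} : Set (EuclideanSpace ℝ (Fin n)))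
      ≤ volume ({z} : Set _) + volume ({x} : Set _) := measure_union_le _ _
    _ = 0 := by simp

lemma IE_int_pos (n : ℕ) (hn : 2 ≤ n) {e pp τ : ℝ}
    {w : EuclideanSpace ℝ (Fin n) → ℝ} (hwC : Continuous w) (hw0 : ∀ y, 0 ≤ w y)
    {y0 : EuclideanSpace ℝ (Fin n)} (hy0 : 0 < w y0) (x : EuclideanSpace ℝ (Fin n))
    (hint : Integrable (fun y => ‖y‖ ^ e * w y ^ pp * ‖x - y‖ ^ τ)) :
    0 < ∫ y, ‖y‖ ^ e * w y ^ pp * ‖x - y‖ ^ τ := by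
  have hf0 : (0 : EuclideanSpace ℝ (Fin n) → ℝ) ≤ fun y => ‖y‖ ^ e * w y ^ pp * ‖x - y‖ ^ τ := by
    intro y
    have := hw0 y
    positivity
  rw [integral_pos_iff_support_of_nonneg hf0 hint]
  obtain ⟨ε, hε, hball⟩ := Metric.isOpen_iff.mp
    (isOpen_lt continuous_const hwC) y0 (by simpa using hy0)
  have hsub : ball y0 ε \ {0, x} ⊆
      Function.support (fun y => ‖y‖ ^ e * w y ^ pp * ‖x - y‖ ^ τ) := by
    rintro y ⟨hy, hy'⟩
    simp only [Set.mem_insert_iff, Set.mem_singleton_iff, not_or] at hy'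
    have h1 : (0:ℝ) < ‖y‖ := norm_pos_iff.mpr hy'.1
    have h2 : 0 < w y := hball hy
    have h3 : (0:ℝ) < ‖x - y‖ := by
      rw [norm_pos_iff, sub_ne_zero]; exact Ne.symm hy'.2
    have : 0 < ‖y‖ ^ e * w y ^ pp * ‖x - y‖ ^ τ :=
      mul_pos (mul_pos (Real.rpow_pos_of_pos h1 e) (Real.rpow_pos_of_pos h2 pp))
        (Real.rpow_pos_of_pos h3 τ)
    exact Function.mem_support.mpr this.ne'
  refine lt_of_lt_of_le ?_ (measure_mono hsub)
  rw [measure_diff_null (IE_pair_null n hn 0 x)]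
  exact Metric.measure_ball_pos _ _ hε

lemma IE_K_pos (n : ℕ) (hn : 2 ≤ n) {e pp : ℝ} (he : 0 ≤ e) (hpp : 0 < pp)
    {w : EuclideanSpace ℝ (Fin n) → ℝ} (hwC : Continuous w) (hw0 : ∀ y, 0 < w y) :
    0 < ∫ y in ball (0 : EuclideanSpace ℝ (Fin n)) 1, ‖y‖ ^ e * w y ^ pp := by
  haveI := IE_nontrivial n hn
  have hg : Continuous (fun y : EuclideanSpace ℝ (Fin n) => ‖y‖ ^ e * w y ^ pp) :=
    (continuous_norm.rpow_const fun y => Or.inr he).mul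
      (hwC.rpow_const fun y => Or.inr hpp.le)
  have hI : IntegrableOn (fun y : EuclideanSpace ℝ (Fin n) => ‖y‖ ^ e * w y ^ pp)
      (ball 0 1) volume :=
    (hg.locallyIntegrable.integrableOn_isCompact (isCompact_closedBall _ _)).mono_set
      ball_subset_closedBall
  rw [setIntegral_pos_iff_support_of_nonneg_ae (ae_of_all _ fun y => by
    have := (hw0 y).le; positivity) hI]
  have hsub : ball (0 : EuclideanSpace ℝ (Fin n)) 1 \ {0} ⊆
      Function.support (fun y => ‖y‖ ^ e * w y ^ pp) ∩ ball 0 1 := by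
    rintro y ⟨hy, hy'⟩
    simp only [Set.mem_singleton_iff] at hy'
    refine ⟨Function.mem_support.mpr ?_, hy⟩
    have h1 : (0:ℝ) < ‖y‖ := norm_pos_iff.mpr hy'
    exact (mul_pos (Real.rpow_pos_of_pos h1 e) (Real.rpow_pos_of_pos (hw0 y) pp)).ne'
  refine lt_of_lt_of_le ?_ (measure_mono hsub)
  rw [measure_diff_null (measure_singleton _)]
  exact Metric.measure_ball_pos _ _ one_pos

lemma IE_lb (n : ℕ) {e pp τ : ℝ} (he : 0 ≤ e) (hpp : 0 < pp) (hτ : τ < 0)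
    {w : EuclideanSpace ℝ (Fin n) → ℝ} (hwC : Continuous w) (hw0 : ∀ y, 0 ≤ w y)
    {x : EuclideanSpace ℝ (Fin n)} (hx : 1 ≤ ‖x‖)
    (hint : Integrable (fun y => ‖y‖ ^ e * w y ^ pp * ‖x - y‖ ^ τ)) :
    (∫ y in ball (0 : EuclideanSpace ℝ (Fin n)) 1, ‖y‖ ^ e * w y ^ pp) * (2 ^ τ * ‖x‖ ^ τ)
      ≤ ∫ y, ‖y‖ ^ e * w y ^ pp * ‖x - y‖ ^ τ := by
  set c : ℝ := 2 ^ τ * ‖x‖ ^ τ with hc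
  have hceq : c = (2 * ‖x‖) ^ τ :=
    (Real.mul_rpow two_pos.le (norm_nonneg x)).symm ▸ rfl
  have hg : Continuous (fun y : EuclideanSpace ℝ (Fin n) => ‖y‖ ^ e * w y ^ pp) :=
    (continuous_norm.rpow_const fun y => Or.inr he).mul
      (hwC.rpow_const fun y => Or.inr hpp.le)
  have hI1 : IntegrableOn (fun y : EuclideanSpace ℝ (Fin n) => ‖y‖ ^ e * w y ^ pp * c)
      (ball 0 1) volume :=
    ((hg.mul continuous_const).locallyIntegrable.integrableOn_isCompact
      (isCompact_closedBall _ _)).mono_set ball_subset_closedBall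
  have hmono : ∫ y in ball (0 : EuclideanSpace ℝ (Fin n)) 1, ‖y‖ ^ e * w y ^ pp * c
      ≤ ∫ y in ball (0 : EuclideanSpace ℝ (Fin n)) 1, ‖y‖ ^ e * w y ^ pp * ‖x - y‖ ^ τ := by
    refine setIntegral_mono_on hI1 (hint.integrableOn) measurableSet_ball fun y hy => ?_
    have hylt : ‖y‖ < 1 := by simpa using hy
    have h3 : (0:ℝ) < ‖x - y‖ := by
      rw [norm_pos_iff, sub_ne_zero]
      intro h; rw [h] at hx; linarith
    have hle : ‖x - y‖ ≤ 2 * ‖x‖ := by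
      calc ‖x - y‖ ≤ ‖x‖ + ‖y‖ := norm_sub_le _ _
        _ ≤ 2 * ‖x‖ := by linarith
    have hcle : c ≤ ‖x - y‖ ^ τ := by
      rw [hceq]
      exact Real.rpow_le_rpow_of_nonpos h3 hle hτ.le
    have hnn : 0 ≤ ‖y‖ ^ e * w y ^ pp := by
      have := hw0 y; positivity
    exact mul_le_mul_of_nonneg_left hcle hnn
  calc (∫ y in ball (0 : EuclideanSpace ℝ (Fin n)) 1, ‖y‖ ^ e * w y ^ pp) * c
      = ∫ y in ball (0 : EuclideanSpace ℝ (Fin n)) 1, ‖y‖ ^ e * w y ^ pp * c := by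
        rw [integral_mul_const]
    _ ≤ ∫ y in ball (0 : EuclideanSpace ℝ (Fin n)) 1, ‖y‖ ^ e * w y ^ pp * ‖x - y‖ ^ τ := hmono
    _ ≤ ∫ y, ‖y‖ ^ e * w y ^ pp * ‖x - y‖ ^ τ :=
        setIntegral_le_integral hint (ae_of_all _ fun y => by
          have := hw0 y; positivity)

/-- Positivity and the lower bound (LB0): nontrivial nonnegative continuous solutions of
the integral system (IE) are everywhere positive and bounded below by multiples of
`|x|^{-(n-γ)}` and `|x|^{-(n-δ)}` for `|x| ≥ 1`. -/
theorem IE_positivity_and_lower_bound (n : ℕ) (hn : 2 ≤ n) (γ δ a b p q : ℝ)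
    (hγ1 : 0 < γ) (hγ2 : γ < n) (hδ1 : 0 < δ) (hδ2 : δ < n)
    (ha : 0 ≤ a) (hb : 0 ≤ b) (hp : 0 < p) (hq : 0 < q)
    (u v : EuclideanSpace ℝ (Fin n) → ℝ)
    (huC : Continuous u) (hvC : Continuous v)
    (hu0 : ∀ x, 0 ≤ u x) (hv0 : ∀ x, 0 ≤ v x)
    (hIE : SolvesIE n γ δ a b p q u v)
    (hne : ¬ ∀ x, u x = 0 ∧ v x = 0) :
    (∀ x, 0 < u x ∧ 0 < v x) ∧
    ∃ C > (0 : ℝ), ∀ x : EuclideanSpace ℝ (Fin n), 1 ≤ ‖x‖ →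
      C * ‖x‖ ^ (-((n : ℝ) - γ)) ≤ u x ∧ C * ‖x‖ ^ (-((n : ℝ) - δ)) ≤ v x := by
  obtain ⟨hIv, hIu, hEu, hEv⟩ := hIE
  have hRγ := Rconst_pos n hγ1 hγ2
  have hRδ := Rconst_pos n hδ1 hδ2
  -- nontriviality
  have hvne : ∃ y, 0 < v y := by
    by_contra h; push_neg at h
    have hv : ∀ y, v y = 0 := fun y => le_antisymm (h y) (hv0 y)
    have hu : ∀ x, u x = 0 := fun x => by
      rw [hEu x]
      simp [hv, Real.zero_rpow hp.ne']
    exact hne fun x => ⟨hu x, hv x⟩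
  have hune : ∃ y, 0 < u y := by
    by_contra h; push_neg at h
    have hu : ∀ y, u y = 0 := fun y => le_antisymm (h y) (hu0 y)
    have hv : ∀ x, v x = 0 := fun x => by
      rw [hEv x]
      simp [hu, Real.zero_rpow hq.ne']
    exact hne fun x => ⟨hu x, hv x⟩
  obtain ⟨yv, hyv⟩ := hvne
  obtain ⟨yu, hyu⟩ := hune
  have hupos : ∀ x, 0 < u x := fun x => by
    rw [hEu x]
    exact mul_pos hRγ (IE_int_pos n hn hvC hv0 hyv x (hIv x))
  have hvpos : ∀ x, 0 < v x := fun x => by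
    rw [hEv x]
    exact mul_pos hRδ (IE_int_pos n hn huC hu0 hyu x (hIu x))
  refine ⟨fun x => ⟨hupos x, hvpos x⟩, ?_⟩
  set Kv : ℝ := ∫ y in ball (0 : EuclideanSpace ℝ (Fin n)) 1, ‖y‖ ^ a * v y ^ p with hKv
  set Ku : ℝ := ∫ y in ball (0 : EuclideanSpace ℝ (Fin n)) 1, ‖y‖ ^ b * u y ^ q with hKu
  have hKvpos : 0 < Kv := IE_K_pos n hn ha hp hvC hvpos
  have hKupos : 0 < Ku := IE_K_pos n hn hb hq huC hupos
  have hτγ : γ - (n : ℝ) < 0 := by linarith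
  have hτδ : δ - (n : ℝ) < 0 := by linarith
  set C1 : ℝ := Rconst n γ * (Kv * 2 ^ (γ - (n : ℝ))) with hC1
  set C2 : ℝ := Rconst n δ * (Ku * 2 ^ (δ - (n : ℝ))) with hC2
  have hC1pos : 0 < C1 := mul_pos hRγ (mul_pos hKvpos (Real.rpow_pos_of_pos two_pos _))
  have hC2pos : 0 < C2 := mul_pos hRδ (mul_pos hKupos (Real.rpow_pos_of_pos two_pos _))
  refine ⟨min C1 C2, lt_min hC1pos hC2pos, fun x hx => ?_⟩
  have hxpow : ∀ τ : ℝ, (0:ℝ) ≤ ‖x‖ ^ τ := fun τ => Real.rpow_nonneg (norm_nonneg x) τ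
  constructor
  · rw [neg_sub]
    calc min C1 C2 * ‖x‖ ^ (γ - (n : ℝ))
        ≤ C1 * ‖x‖ ^ (γ - (n : ℝ)) :=
          mul_le_mul_of_nonneg_right (min_le_left _ _) (hxpow _)
      _ = Rconst n γ * (Kv * (2 ^ (γ - (n : ℝ)) * ‖x‖ ^ (γ - (n : ℝ)))) := by ring
      _ ≤ Rconst n γ * ∫ y, ‖y‖ ^ a * v y ^ p * ‖x - y‖ ^ (γ - (n : ℝ)) := by
          exact mul_le_mul_of_nonneg_left (IE_lb n ha hp hτγ hvC hv0 hx (hIv x)) hRγ.le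
      _ = u x := (hEu x).symm
  · rw [neg_sub]
    calc min C1 C2 * ‖x‖ ^ (δ - (n : ℝ))
        ≤ C2 * ‖x‖ ^ (δ - (n : ℝ)) :=
          mul_le_mul_of_nonneg_right (min_le_right _ _) (hxpow _)
      _ = Rconst n δ * (Ku * (2 ^ (δ - (n : ℝ)) * ‖x‖ ^ (δ - (n : ℝ)))) := by ring
      _ ≤ Rconst n δ * ∫ y, ‖y‖ ^ b * u y ^ q * ‖x - y‖ ^ (δ - (n : ℝ)) := by
          exact mul_le_mul_of_nonneg_left (IE_lb n hb hq hτδ huC hu0 hx (hIu x)) hRδ.le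
      _ = v x := (hEv x).symm
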